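/- With the setup described in the context, suppose moreover that v, m ∈ ℤ^N and a ∈ ℤ^r satisfy ⟨v,u_i⟩ + a_i = 0 for i = 1,…,N and ⟨m,u_i⟩ + a_i ≥ 0 for all i = 1,…,r, and let y ∈ (Kˣ)^k be such that every coordinate of y^{L2} lies in the image of F under the inclusion F ⊆ K. Then the evaluation ∏_{i=1}^r (x(y)_i)^{⟨m,u_i⟩+a_i} (computed in K with the convention 0^0 = 1) lies in the image of F in K. (Paper: Corollary 3.16 'EvRat': the evaluation of a monomial χ^{⟨m,P⟩} at a normalized representative of an F_q-rational point belongs to F_q.) -/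

import Mathlib

/-- The `N×N` submatrix of an `r×N` matrix formed by its first `N` rows. -/
def firstRows {r N : ℕ} (hNr : N ≤ r) (A : Matrix (Fin r) (Fin N) ℤ) :
    Matrix (Fin N) (Fin N) ℤ :=
  Matrix.of fun i j => A ⟨(i : ℕ), by have := i.isLt; omega⟩ j

/-- The `k×k` bottom-right block of an `N×N` matrix (rows and columns
`N-k+1, …, N`). -/
def lowerRight {N k : ℕ} (hkN : k ≤ N) (H : Matrix (Fin N) (Fin N) ℤ) :
    Matrix (Fin k) (Fin k) ℤ :=
  Matrix.of fun i j =>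
    H ⟨N - k + (i : ℕ), by have := i.isLt; omega⟩
      ⟨N - k + (j : ℕ), by have := j.isLt; omega⟩

/-- The `v`-normalized tuple `x(y) ∈ K^r` attached to `y ∈ (Kˣ)^k`. -/
def xvec {K : Type*} [Field K] {k N r : ℕ} (hkN : k ≤ N) (hNr : N ≤ r)
    (y : Fin k → Kˣ) : Fin r → K :=
  fun i =>
    if h1 : (i : ℕ) < N - k then 0
    else if h2 : (i : ℕ) < N then (y ⟨(i : ℕ) - (N - k), by omega⟩ : K)
    else 1

private lemma zpow_sum' {G : Type*} [CommGroup G] (a : G) {ι : Type*} (s : Finset ι)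
    (f : ι → ℤ) : a ^ (∑ i ∈ s, f i) = ∏ i ∈ s, a ^ f i := by
  classical
  induction s using Finset.induction_on with
  | empty => simp
  | insert _ _ h ih =>
    rename_i i s
    rw [Finset.sum_insert h, Finset.prod_insert h, zpow_add, ih]

/-- Corollary 3.16 'EvRat': the evaluation of a monomial
`χ^{⟨m,P⟩}` at the `v`-normalized tuple `x(y)` of an `F_q`-rational point
(i.e. all coordinates of `y^{L2}` lie in `F`) belongs to the image of `F`. -/
theorem stmt_9 {F K : Type*} [Field F] [Fintype F] [Field K] [Algebra F K]
    [IsAlgClosure F K] {k N r : ℕ}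
    (hk : 0 < k) (hkN : k ≤ N) (hNr : N ≤ r)
    (A : Matrix (Fin r) (Fin N) ℤ)
    (T : Matrix (Fin N) (Fin N) ℤ) (hT : IsUnit T.det)
    (hlow : ∀ i j : Fin N, (i : ℕ) < (j : ℕ) → (firstRows hNr A * T) i j = 0)
    (hdet : (firstRows hNr A).det ≠ 0)
    (hchar : ∀ p : ℕ, 0 < p → CharP K p → ¬ ((p : ℤ) ∣ (firstRows hNr A).det))
    (v m : Fin N → ℤ) (a : Fin r → ℤ)
    (hv : ∀ i : Fin r, (i : ℕ) < N → (∑ j : Fin N, v j * A i j) + a i = 0)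
    (hm : ∀ i : Fin r, 0 ≤ (∑ j : Fin N, m j * A i j) + a i)
    (y : Fin k → Kˣ)
    (hy : ∀ j : Fin k,
      ((∏ i : Fin k, y i ^ lowerRight hkN (firstRows hNr A * T) i j : Kˣ) : K)
        ∈ Set.range (algebraMap F K)) :
    (∏ i : Fin r, (xvec hkN hNr y i) ^ ((∑ j : Fin N, m j * A i j) + a i).toNat)
      ∈ Set.range (algebraMap F K) := by
  classical
  set A' := firstRows hNr A with hA'def
  set H := A' * T with hHdef
  set E : Fin r → ℤ := fun i => (∑ j : Fin N, m j * A i j) + a i with hEdef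
  show (∏ i : Fin r, (xvec hkN hNr y i) ^ (E i).toNat) ∈ Set.range (algebraMap F K)
  by_cases hzero : ∃ i : Fin r, (i : ℕ) < N - k ∧ E i ≠ 0
  · obtain ⟨i, hi, hEi⟩ := hzero
    refine ⟨0, ?_⟩
    rw [map_zero]
    symm
    apply Finset.prod_eq_zero (Finset.mem_univ i)
    have hx : xvec hkN hNr y i = 0 := by simp [xvec, hi]
    rw [hx, zero_pow]
    have h1 : 0 ≤ E i := hm i
    omega
  push_neg at hzero
  -- basic determinant facts
  have hdetT : T.det ≠ 0 := by
    rcases Int.isUnit_iff.mp hT with h | h <;> simp [h]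
  have hdetH : H.det ≠ 0 := by
    rw [hHdef, Matrix.det_mul]
    exact mul_ne_zero hdet hdetT
  have hHtri : H.BlockTriangular OrderDual.toDual := by
    intro a b hab
    exact hlow a b (by exact_mod_cast hab)
  have hHdiag : ∀ i : Fin N, H i i ≠ 0 := by
    intro i hHi
    apply hdetH
    rw [Matrix.det_of_lowerTriangular H hHtri]
    exact Finset.prod_eq_zero (Finset.mem_univ i) hHi
  -- the vector s
  set b : Fin N → ℤ := fun j => m j - v j with hbdef
  set s : Fin N → ℤ := T⁻¹.mulVec b with hsdef
  have hHs : H.mulVec s = A'.mulVec b := by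
    rw [hsdef, Matrix.mulVec_mulVec, hHdef, Matrix.mul_assoc,
      Matrix.mul_nonsing_inv T hT, Matrix.mul_one]
  -- exponents on the first N rows equal H *ᵥ s
  have hEeq : ∀ i : Fin N, E ⟨(i : ℕ), lt_of_lt_of_le i.isLt hNr⟩ = H.mulVec s i := by
    intro i
    rw [hHs]
    set i' : Fin r := ⟨(i : ℕ), lt_of_lt_of_le i.isLt hNr⟩ with hi'def
    have h0 := hv i' i.isLt
    have h1 : A'.mulVec b i = ∑ j, (m j - v j) * A i' j := by
      simp only [Matrix.mulVec, dotProduct, hA'def, firstRows, Matrix.of_apply, hbdef]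
      refine Finset.sum_congr rfl fun j _ => ?_
      have : (⟨(i : ℕ), lt_of_lt_of_le i.isLt hNr⟩ : Fin r) = i' := rfl
      rw [this, mul_comm]
    have h2 : ∑ j, (m j - v j) * A i' j
        = (∑ j, m j * A i' j) - (∑ j, v j * A i' j) := by
      rw [← Finset.sum_sub_distrib]
      exact Finset.sum_congr rfl fun j _ => by ring
    have h3 : E i' = (∑ j, m j * A i' j) + a i' := rfl
    rw [h1, h2, h3]
    omega
  -- the first N-k coordinates of s vanish
  have hs0 : ∀ n : ℕ, ∀ i : Fin N, (i : ℕ) = n → (i : ℕ) < N - k → s i = 0 := by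
    intro n
    induction n using Nat.strong_induction_on with
    | _ n ih =>
      intro i hin hi
      have hEi : H.mulVec s i = 0 := by
        rw [← hEeq i]
        exact hzero _ (by simpa using hi)
      have hsum : ∑ j, H i j * s j = 0 := hEi
      have hsingle : ∑ j, H i j * s j = H i i * s i := by
        refine Finset.sum_eq_single i (fun j _ hji => ?_) (by simp)
        rcases lt_or_gt_of_ne (fun h : (j : ℕ) = (i : ℕ) => hji (Fin.ext h)) with h | h
        · have : s j = 0 := ih (j : ℕ) (by omega) j rfl (by omega)
          rw [this, mul_zero]
        · rw [hlow i j h, zero_mul]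
      rw [hsingle] at hsum
      exact (mul_eq_zero.mp hsum).resolve_left (hHdiag i)
  -- the middle exponents
  set ι : Fin k → Fin r := fun j => ⟨N - k + (j : ℕ), by have := j.isLt; omega⟩ with hιdef
  set ιN : Fin k → Fin N := fun j => ⟨N - k + (j : ℕ), by have := j.isLt; omega⟩ with hιNdef
  set s'' : Fin k → ℤ := fun j => s (ιN j) with hs''def
  have hmid : ∀ j : Fin k, E (ι j) = ∑ j' : Fin k, lowerRight hkN H j j' * s'' j' := by
    intro j
    have h1 : E (ι j) = H.mulVec s (ιN j) := hEeq (ιN j)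
    rw [h1]
    show ∑ j', H (ιN j) j' * s j' = _
    symm
    refine Finset.sum_of_injOn ιN (fun a _ b _ hab => ?_) (by simp)
      (fun j' _ hj' => ?_) (fun j' _ => ?_)
    · have : N - k + (a : ℕ) = N - k + (b : ℕ) := congrArg Fin.val hab
      exact Fin.ext (by omega)
    · -- j' not in image : (j' : ℕ) < N - k
      have hj'lt : (j' : ℕ) < N - k := by
        by_contra hge
        push_neg at hge
        exact hj' ⟨⟨(j' : ℕ) - (N - k), by have := j'.isLt; omega⟩, Finset.mem_coe.mpr (Finset.mem_univ _),
          Fin.ext (by show N - k + ((j' : ℕ) - (N - k)) = (j' : ℕ); omega)⟩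
      rw [hs0 _ j' rfl hj'lt, mul_zero]
    · rfl
  -- rationality data
  choose f hf using hy
  refine ⟨∏ j' : Fin k, f j' ^ s'' j', ?_⟩
  rw [map_prod]
  have hterm : ∀ j' : Fin k, algebraMap F K (f j' ^ s'' j')
      = ((((∏ i : Fin k, y i ^ lowerRight hkN H i j') ^ s'' j' : Kˣ)) : K) := by
    intro j'
    rw [map_zpow₀, hf j', Units.val_zpow_eq_zpow_val]
  rw [Finset.prod_congr rfl fun j' _ => hterm j']
  -- the group computation in Kˣ
  have hgroup : (∏ j : Fin k, y j ^ E (ι j))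
      = ∏ j' : Fin k, (∏ i : Fin k, y i ^ lowerRight hkN H i j') ^ s'' j' := by
    calc ∏ j : Fin k, y j ^ E (ι j)
        = ∏ j : Fin k, ∏ j' : Fin k, (y j ^ lowerRight hkN H j j') ^ s'' j' := by
          refine Finset.prod_congr rfl fun j _ => ?_
          rw [hmid j, zpow_sum']
          exact Finset.prod_congr rfl fun j' _ => by rw [zpow_mul]
      _ = ∏ j' : Fin k, (∏ j : Fin k, y j ^ lowerRight hkN H j j') ^ s'' j' := by
          rw [Finset.prod_comm]
          exact Finset.prod_congr rfl fun j' _ => Finset.prod_zpow _ _ _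
  -- reduce the big product over Fin r to the middle block
  have hLHS : (∏ i : Fin r, (xvec hkN hNr y i) ^ (E i).toNat)
      = ((Units.coeHom K) (∏ j : Fin k, y j ^ E (ι j)) : K) := by
    rw [map_prod]
    refine (Finset.prod_of_injOn ι (fun a _ b _ hab => ?_) (by simp)
      (fun i _ hi => ?_) (fun j _ => ?_)).symm
    · have : N - k + (a : ℕ) = N - k + (b : ℕ) := congrArg Fin.val hab
      exact Fin.ext (by omega)
    · -- i outside the image: factor is 1
      have hcase : (i : ℕ) < N - k ∨ N ≤ (i : ℕ) := by
        by_contra hc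
        push_neg at hc
        exact hi ⟨⟨(i : ℕ) - (N - k), by omega⟩, Finset.mem_coe.mpr (Finset.mem_univ _),
          Fin.ext (by show N - k + ((i : ℕ) - (N - k)) = (i : ℕ); omega)⟩
      rcases hcase with hlt | hge
      · rw [hzero i hlt]
        simp
      · have hx : xvec hkN hNr y i = 1 := by
          unfold xvec
          rw [dif_neg (by omega), dif_neg (by omega)]
        rw [hx, one_pow]
    · -- the middle factors
      have hx : xvec hkN hNr y (ι j) = (y j : K) := by
        have h1 : ¬ ((ι j : ℕ) < N - k) := by
          show ¬ (N - k + (j : ℕ) < N - k); omega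
        have h2 : ((ι j : ℕ)) < N := by
          have := j.isLt; show N - k + (j : ℕ) < N; omega
        unfold xvec
        rw [dif_neg h1, dif_pos h2]
        exact congrArg (fun t : Fin k => ((y t : Kˣ) : K))
          (Fin.ext (show N - k + (j : ℕ) - (N - k) = (j : ℕ) by omega))
      have hnn : 0 ≤ E (ι j) := hm (ι j)
      rw [hx, Units.coeHom_apply, Units.val_zpow_eq_zpow_val,
        ← zpow_natCast, Int.toNat_of_nonneg hnn]
  symm
  rw [hLHS, hgroup, map_prod]
  rfl
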